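/- Packing lower bound (additive-error bound): Let P have length m and k < m, and let α < m − k − 1. Suppose Alg is an ε-differentially private algorithm on strings of length n (n a multiple of m) such that whenever S contains a window at distance ≤ k from P, Alg outputs with probability ≥ 2/3 a position i with dist_H(S[i,i+m-1],P) ≤ k + α. Then α ≥ (2ε)^{-1}(ln(n/(2m)) + ln(2/3)) − 1. -/

import Mathlib

lemma hd_def {ι : Type*} [Fintype ι] {β : ι → Type*} [∀ i, DecidableEq (β i)]
    (x y : ∀ i, β i) : hammingDist x y = (Finset.univ.filter fun i => x i ≠ y i).card := rfl

def pst {σ : Type*} {m : ℕ} (d : σ) (hm : 0 < m) (P : Fin m → σ) (k c j x : ℕ) : σ :=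
  if x / m = j ∧ k ≤ x % m then P ⟨x % m, Nat.mod_lt x hm⟩
  else if Even (x / m) ∧ c ≤ x % m then P ⟨x % m, Nat.mod_lt x hm⟩ else d

lemma modChar {m c : ℕ} (hm : 0 < m) (x : ℕ) :
    (Even (x / m) ∧ c ≤ x % m) ↔ (c ≤ x % (2 * m) ∧ x % (2 * m) < m) := by
  have h2m : 0 < 2 * m := by omega
  have hb : x % (2 * m) < 2 * m := Nat.mod_lt x h2m
  have h1 : x % (2 * m) % m = x % m := Nat.mod_mod_of_dvd x ⟨2, by ring⟩
  have h2 : x / m = 2 * (x / (2 * m)) + x % (2 * m) / m := by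
    conv_lhs => rw [← Nat.div_add_mod x (2 * m)]
    rw [show 2 * m * (x / (2 * m)) = m * (2 * (x / (2 * m))) by ring, Nat.mul_add_div hm]
  rw [h2, ← h1]
  by_cases hlt : x % (2 * m) < m
  · rw [Nat.div_eq_of_lt hlt, Nat.mod_eq_of_lt hlt]
    simp [Nat.even_add, hlt, parity_simps]
  · have hdiv : x % (2 * m) / m = 1 := by
      have h3 : 1 ≤ x % (2 * m) / m := (Nat.le_div_iff_mul_le hm).mpr (by omega)
      have h4 : x % (2 * m) / m < 2 := Nat.div_lt_of_lt_mul (by omega)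
      omega
    rw [hdiv]
    simp only [Nat.even_add, iff_false_intro hlt, and_false, iff_false]
    simp [parity_simps]

lemma countBound {m c : ℕ} (hm : 0 < m) (hc : c ≤ m) (i : ℕ) :
    ((Finset.univ : Finset (Fin m)).filter
      (fun s => Even ((i + s.1) / m) ∧ c ≤ (i + s.1) % m)).card ≤ m - c := by
  have h := Finset.card_le_card_of_injOn (f := fun s : Fin m => (i + s.1) % (2 * m))
    (s := (Finset.univ : Finset (Fin m)).filter
      (fun s => Even ((i + s.1) / m) ∧ c ≤ (i + s.1) % m))
    (t := Finset.Ico c m) ?_ ?_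
  · simpa using h
  · intro s hs
    simp only [Finset.mem_coe, Finset.mem_filter, Finset.mem_univ, true_and] at hs
    rw [modChar hm] at hs
    simp [Finset.mem_Ico, hs.1, hs.2]
  · intro s₁ hs₁ s₂ hs₂ hh
    have hmod : s₁.1 % (2 * m) = s₂.1 % (2 * m) :=
      Nat.ModEq.add_left_cancel' i hh
    have e1 : s₁.1 % (2 * m) = s₁.1 := Nat.mod_eq_of_lt (by have := s₁.2; omega)
    have e2 : s₂.1 % (2 * m) = s₂.1 := Nat.mod_eq_of_lt (by have := s₂.2; omega)
    exact Fin.ext (by omega)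

lemma farWindow {σ : Type*} [DecidableEq σ] {m k c j : ℕ} {d : σ} {P : Fin m → σ}
    (hm : 0 < m) (hd : ∀ t, P t ≠ d) (hc : c ≤ m) (hkc : k ≤ c) (i : ℕ)
    (hfar : i + m ≤ j * m ∨ j * m + m ≤ i) :
    c ≤ hammingDist (fun s : Fin m => pst d hm P k c j (i + s.1)) P := by
  classical
  have hblock : ∀ s : Fin m, (i + s.1) / m ≠ j := by
    intro s hjs
    rcases hfar with hf | hf
    · have : (i + s.1) / m < j := (Nat.div_lt_iff_lt_mul hm).mpr (by have := s.2; omega)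
      omega
    · have hjm : (j + 1) * m = j * m + m := by ring
      have : j + 1 ≤ (i + s.1) / m := (Nat.le_div_iff_mul_le hm).mpr (by omega)
      omega
  have hsub : (Finset.univ : Finset (Fin m)).filter
      (fun s => pst d hm P k c j (i + s.1) ≠ d) ⊆
      (Finset.univ : Finset (Fin m)).filter
      (fun s => Even ((i + s.1) / m) ∧ c ≤ (i + s.1) % m) := by
    intro s hs
    simp only [Finset.mem_filter, Finset.mem_univ, true_and] at hs ⊢
    unfold pst at hs
    split_ifs at hs with h1 h2
    · exact absurd h1.1 (hblock s)
    · exact h2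
    · exact absurd rfl hs
  have hcard1 : ((Finset.univ : Finset (Fin m)).filter
      (fun s => pst d hm P k c j (i + s.1) ≠ d)).card ≤ m - c :=
    le_trans (Finset.card_le_card hsub) (countBound hm hc i)
  have hcard2 : ((Finset.univ : Finset (Fin m)).filter
        (fun s => pst d hm P k c j (i + s.1) = d)).card +
      ((Finset.univ : Finset (Fin m)).filter
        (fun s => pst d hm P k c j (i + s.1) ≠ d)).card = m := by
    rw [Finset.card_filter_add_card_filter_not]
    simp
  have hsub2 : (Finset.univ : Finset (Fin m)).filter
      (fun s => pst d hm P k c j (i + s.1) = d) ⊆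
      (Finset.univ : Finset (Fin m)).filter
      (fun s => pst d hm P k c j (i + s.1) ≠ P s) := by
    intro s hs
    simp only [Finset.mem_filter, Finset.mem_univ, true_and] at hs ⊢
    rw [hs]
    exact fun hh => hd s hh.symm
  have := Finset.card_le_card hsub2
  rw [hd_def]
  omega

lemma nearWindow {σ : Type*} [DecidableEq σ] {m k c j : ℕ} {d : σ} {P : Fin m → σ}
    (hm : 0 < m) :
    hammingDist (fun s : Fin m => pst d hm P k c j (j * m + s.1)) P ≤ k := by
  classical
  rw [hd_def]
  have h := Finset.card_le_card_of_injOn (f := fun s : Fin m => s.1)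
    (s := (Finset.univ : Finset (Fin m)).filter
      (fun s => pst d hm P k c j (j * m + s.1) ≠ P s))
    (t := Finset.range k) ?_ ?_
  · simpa using h
  · intro s hs
    simp only [Finset.mem_coe, Finset.mem_filter, Finset.mem_univ, true_and] at hs
    simp only [Finset.mem_coe, Finset.mem_range]
    by_contra hks
    push_neg at hks
    apply hs
    have hq : (j * m + s.1) / m = j := by
      rw [add_comm, Nat.add_mul_div_right _ _ hm, Nat.div_eq_of_lt s.2]; omega
    have hr : (j * m + s.1) % m = s.1 := by
      rw [add_comm, Nat.add_mul_mod_self_right, Nat.mod_eq_of_lt s.2]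
    unfold pst
    rw [if_pos ⟨hq, by omega⟩]
    congr 1
    exact Fin.ext (by simp [hr])
  · intro s₁ _ s₂ _ hh
    exact Fin.ext hh

lemma stringsDist {σ : Type*} [DecidableEq σ] {n m k c j j' : ℕ} {d : σ} {P : Fin m → σ}
    (hm : 0 < m) (hj : Even j) (hj' : Even j') (hkc : k ≤ c) :
    hammingDist (fun x : Fin n => pst d hm P k c j x.1)
      (fun x : Fin n => pst d hm P k c j' x.1) ≤ 2 * (c - k) := by
  classical
  rw [hd_def]
  have h := Finset.card_le_card_of_injOn (f := fun x : Fin n => x.1)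
    (s := (Finset.univ : Finset (Fin n)).filter
      (fun x => pst d hm P k c j x.1 ≠ pst d hm P k c j' x.1))
    (t := Finset.Ico (j * m + k) (j * m + c) ∪ Finset.Ico (j' * m + k) (j' * m + c)) ?_ ?_
  · refine le_trans h (le_trans (Finset.card_union_le _ _) ?_)
    simp [Nat.card_Ico]
    omega
  · intro x hx
    simp only [Finset.mem_coe, Finset.mem_filter, Finset.mem_univ, true_and] at hx
    have hdm := Nat.div_add_mod x.1 m
    have key : ∀ jj, Even jj → ¬(x.1 / m = jj ∧ k ≤ x.1 % m ∧ x.1 % m < c) →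
        pst d hm P k c jj x.1 =
          (if Even (x.1 / m) ∧ c ≤ x.1 % m then P ⟨x.1 % m, Nat.mod_lt x.1 hm⟩ else d) := by
      intro jj hev hnot
      unfold pst
      by_cases hcase : x.1 / m = jj ∧ k ≤ x.1 % m
      · have hcr : c ≤ x.1 % m := by
          by_contra hcon
          exact hnot ⟨hcase.1, hcase.2, by omega⟩
        rw [if_pos hcase, if_pos ⟨by rw [hcase.1]; exact hev, hcr⟩]
      · rw [if_neg hcase]
    have hor : (x.1 / m = j ∧ k ≤ x.1 % m ∧ x.1 % m < c) ∨
        (x.1 / m = j' ∧ k ≤ x.1 % m ∧ x.1 % m < c) := by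
      by_cases c1 : x.1 / m = j ∧ k ≤ x.1 % m ∧ x.1 % m < c
      · exact Or.inl c1
      · by_cases c2 : x.1 / m = j' ∧ k ≤ x.1 % m ∧ x.1 % m < c
        · exact Or.inr c2
        · exact absurd ((key j hj c1).trans (key j' hj' c2).symm) hx
    simp only [Finset.mem_coe, Finset.mem_union, Finset.mem_Ico]
    rcases hor with ⟨hq, hr1, hr2⟩ | ⟨hq, hr1, hr2⟩
    · rw [hq] at hdm
      have hcomm : m * j = j * m := Nat.mul_comm m j
      exact Or.inl ⟨by omega, by omega⟩
    · rw [hq] at hdm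
      have hcomm : m * j' = j' * m := Nat.mul_comm m j'
      exact Or.inr ⟨by omega, by omega⟩
  · intro x₁ _ x₂ _ hh
    exact Fin.ext hh

lemma groupDP {σ : Type*} [DecidableEq σ] {n : ℕ} {ε : ℝ} (hε : 0 ≤ ε)
    {Alg : (Fin n → σ) → PMF ℕ}
    (hDP : ∀ S S' : Fin n → σ, hammingDist S S' = 1 → ∀ Out : Set ℕ,
      (Alg S).toOuterMeasure Out ≤ ENNReal.ofReal (Real.exp ε) * (Alg S').toOuterMeasure Out) :
    ∀ (ℓ : ℕ) (S S' : Fin n → σ), hammingDist S S' ≤ ℓ → ∀ Out : Set ℕ,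
      (Alg S).toOuterMeasure Out ≤ ENNReal.ofReal (Real.exp (ℓ * ε)) * (Alg S').toOuterMeasure Out := by
  intro ℓ
  induction ℓ with
  | zero =>
    intro S S' h Out
    have hSS : S = S' := hammingDist_eq_zero.mp (le_antisymm h (Nat.zero_le _))
    subst hSS
    simp [Real.exp_zero]
  | succ ℓ ih =>
    intro S S' h Out
    by_cases h0 : hammingDist S S' ≤ ℓ
    · refine le_trans (ih S S' h0 Out) (mul_le_mul_left (ENNReal.ofReal_le_ofReal
        (Real.exp_le_exp.mpr ?_)) _)
      push_cast
      nlinarith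
    · have hne : S ≠ S' := by
        intro he; subst he; simp [hammingDist_self] at h0
      obtain ⟨x, hx⟩ : ∃ x, S x ≠ S' x := Function.ne_iff.mp hne
      set S'' := Function.update S x (S' x) with hS''
      have hmem : x ∈ Finset.univ.filter fun y => S y ≠ S' y := by simp [hx]
      have d1 : hammingDist S S'' = 1 := by
        rw [hd_def]
        have : (Finset.univ.filter fun y => S y ≠ S'' y) = {x} := by
          ext y
          by_cases hy : y = x <;> simp [hy, hS'', Function.update_apply, hx]
        rw [this, Finset.card_singleton]
      have d2 : hammingDist S'' S' ≤ ℓ := by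
        have hsub : (Finset.univ.filter fun y => S'' y ≠ S' y) ⊆
            (Finset.univ.filter fun y => S y ≠ S' y).erase x := by
          intro y hy
          simp only [Finset.mem_filter, Finset.mem_univ, true_and] at hy
          by_cases hyx : y = x
          · exfalso; apply hy; simp [hyx, hS'']
          · simp only [Finset.mem_erase, Finset.mem_filter, Finset.mem_univ, true_and]
            refine ⟨hyx, ?_⟩
            simpa [hS'', Function.update_apply, hyx] using hy
        have := Finset.card_le_card hsub
        rw [Finset.card_erase_of_mem hmem] at this
        rw [hd_def] at h ⊢
        omega
      calc (Alg S).toOuterMeasure Out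
          ≤ ENNReal.ofReal (Real.exp ε) * (Alg S'').toOuterMeasure Out := hDP _ _ d1 Out
        _ ≤ ENNReal.ofReal (Real.exp ε) *
            (ENNReal.ofReal (Real.exp (ℓ * ε)) * (Alg S').toOuterMeasure Out) :=
            mul_le_mul_right (ih S'' S' d2 Out) _
        _ = ENNReal.ofReal (Real.exp ((ℓ + 1 : ℕ) * ε)) * (Alg S').toOuterMeasure Out := by
            rw [← mul_assoc, ← ENNReal.ofReal_mul (Real.exp_nonneg _), ← Real.exp_add]
            congr 2
            push_cast; ring


/-- Packing lower bound (additive-error bound): any `ε`-differentially private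
algorithm on strings of length `n` that, whenever some window of `S` is within
Hamming distance `k` of `P`, outputs with probability at least `2/3` a position
whose window is within distance `k + α` of `P` (with `α < m − k − 1`), must have
`α ≥ (2ε)⁻¹ (ln(n/(2m)) + ln(2/3)) − 1`. -/
theorem packing_lower_bound_additive_error {σ : Type*} [DecidableEq σ]
    {n m k α : ℕ} (hm : 0 < m) (hmn : m ≤ n) (hmod : m ∣ n)
    (P : Fin m → σ) (hdollar : ∃ d : σ, d ∉ Set.range P)
    (hk : k < m) (hα : α + k + 1 < m)
    (ε : ℝ) (hε : 0 < ε) (Alg : (Fin n → σ) → PMF ℕ)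
    (hDP : ∀ S S' : Fin n → σ, hammingDist S S' = 1 → ∀ Out : Set ℕ,
      (Alg S).toOuterMeasure Out ≤
        ENNReal.ofReal (Real.exp ε) * (Alg S').toOuterMeasure Out)
    (hUtil : ∀ S : Fin n → σ,
      (∃ j, j ≤ n - m ∧
        hammingDist
          (fun t : Fin m => S ⟨(j + t.1) % n, Nat.mod_lt _ (lt_of_lt_of_le hm hmn)⟩) P ≤ k) →
      (2 / 3 : ENNReal) ≤ (Alg S).toOuterMeasure
        {i | i ≤ n - m ∧
          hammingDist
            (fun t : Fin m => S ⟨(i + t.1) % n, Nat.mod_lt _ (lt_of_lt_of_le hm hmn)⟩) P ≤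
            k + α}) :
    (2 * ε)⁻¹ * (Real.log ((n : ℝ) / (2 * m)) + Real.log (2 / 3)) - 1 ≤ (α : ℝ) := by
  classical
  obtain ⟨d, hdmem⟩ := hdollar
  have hdP : ∀ t, P t ≠ d := fun t ht => hdmem ⟨t, ht⟩
  set c := k + α + 1 with hcdef
  have hcm : c ≤ m := by omega
  have hkc : k ≤ c := by omega
  have hn0 : 0 < n := lt_of_lt_of_le hm hmn
  set N := n / m with hNdef
  have hnN : N * m = n := Nat.div_mul_cancel hmod
  have hN1 : 1 ≤ N := by
    rcases Nat.eq_zero_or_pos N with h0 | h1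
    · rw [h0] at hnN; omega
    · exact h1
  set L := (N + 1) / 2 with hLdef
  have hL1 : 1 ≤ L := by omega
  set Sf : ℕ → (Fin n → σ) := fun j => fun x => pst d hm P k c j x.1 with hSf
  have hwd : ∀ j i, i ≤ n - m →
      hammingDist
        (fun t : Fin m => Sf j ⟨(i + t.1) % n, Nat.mod_lt _ (lt_of_lt_of_le hm hmn)⟩) P
        = hammingDist (fun t : Fin m => pst d hm P k c j (i + t.1)) P := by
    intro j i hi
    congr 1
    funext t
    show pst d hm P k c j ((i + t.1) % n) = _
    rw [Nat.mod_eq_of_lt (by have := t.2; omega)]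
  set OutS : ℕ → Set ℕ := fun j => {i | i ≤ n - m ∧
    hammingDist
      (fun t : Fin m => Sf j ⟨(i + t.1) % n, Nat.mod_lt _ (lt_of_lt_of_le hm hmn)⟩) P ≤
      k + α} with hOutS
  -- utility for each even block
  have key1 : ∀ t, t < L → (2 / 3 : ENNReal) ≤ (Alg (Sf (2 * t))).toOuterMeasure (OutS (2 * t)) := by
    intro t ht
    apply hUtil (Sf (2 * t))
    have h2t : 2 * t < N := by omega
    have hbound : 2 * t * m + m ≤ n := by
      have h1 : (2 * t + 1) * m ≤ N * m := Nat.mul_le_mul_right m (by omega)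
      have h2 : (2 * t + 1) * m = 2 * t * m + m := by ring
      omega
    refine ⟨2 * t * m, by omega, ?_⟩
    rw [hwd (2 * t) (2 * t * m) (by omega)]
    exact nearWindow hm
  -- containment of good outputs
  have keyC : ∀ t i, i ∈ OutS (2 * t) → 2 * t * m < i + m ∧ i < 2 * t * m + m := by
    intro t i hi
    obtain ⟨hile, hdist⟩ := hi
    rw [hwd (2 * t) i hile] at hdist
    have hkey : ¬(i + m ≤ 2 * t * m ∨ 2 * t * m + m ≤ i) := by
      intro hfar
      have := farWindow (P := P) (d := d) (k := k) (c := c) (j := 2 * t)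
        hm hdP hcm hkc i hfar
      omega
    omega
  -- group privacy
  set E : ENNReal := ENNReal.ofReal (Real.exp ((2 * (α + 1) : ℕ) * ε)) with hE
  have key2 : ∀ t, (Alg (Sf (2 * t))).toOuterMeasure (OutS (2 * t)) ≤
      E * (Alg (Sf 0)).toOuterMeasure (OutS (2 * t)) := by
    intro t
    have hdist0 : hammingDist (Sf (2 * t)) (Sf 0) ≤ 2 * (α + 1) := by
      have h := stringsDist (n := n) (j := 2 * t) (j' := 0) (d := d) (P := P)
        hm ⟨t, by ring⟩ (Even.zero) hkc
      have hck : c - k = α + 1 := by omega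
      rw [hck] at h
      exact h
    exact groupDP hε.le hDP (2 * (α + 1)) _ _ hdist0 _
  -- disjoint sum bound
  have hsum1 : ∑ t ∈ Finset.range L, (Alg (Sf 0)).toOuterMeasure (OutS (2 * t)) ≤ 1 := by
    have heq : ∀ t : ℕ, (Alg (Sf 0)).toOuterMeasure (OutS (2 * t)) =
        ∑' i, (OutS (2 * t)).indicator (Alg (Sf 0)) i :=
      fun t => PMF.toOuterMeasure_apply _ _
    calc ∑ t ∈ Finset.range L, (Alg (Sf 0)).toOuterMeasure (OutS (2 * t))
        = ∑' i, ∑ t ∈ Finset.range L, (OutS (2 * t)).indicator (Alg (Sf 0)) i := by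
          simp_rw [heq]
          rw [← Summable.tsum_finsetSum (fun i _ => ENNReal.summable)]
      _ ≤ ∑' i, (Alg (Sf 0)) i := by
          refine ENNReal.tsum_le_tsum fun i => ?_
          by_cases hex : ∃ t₀ ∈ Finset.range L, i ∈ OutS (2 * t₀)
          · obtain ⟨t₀, ht₀, hmem⟩ := hex
            rw [Finset.sum_eq_single_of_mem t₀ ht₀ ?_]
            · rw [Set.indicator_of_mem hmem]
            · intro b _ hb
              apply Set.indicator_of_notMem
              intro hbmem
              have h1 := keyC t₀ i hmem
              have h2 := keyC b i hbmem
              apply hb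
              have e1 : 2 * b * m < (2 * t₀ + 2) * m := by
                have : (2 * t₀ + 2) * m = 2 * t₀ * m + 2 * m := by ring
                omega
              have e2 : 2 * t₀ * m < (2 * b + 2) * m := by
                have : (2 * b + 2) * m = 2 * b * m + 2 * m := by ring
                omega
              have f1 := Nat.lt_of_mul_lt_mul_right e1
              have f2 := Nat.lt_of_mul_lt_mul_right e2
              omega
          · push_neg at hex
            rw [Finset.sum_eq_zero fun b hb => Set.indicator_of_notMem (hex b hb) _]
            exact zero_le
      _ = 1 := (Alg (Sf 0)).tsum_coe
  have hmain : (L : ENNReal) * (2 / 3) ≤ E := by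
    calc (L : ENNReal) * (2 / 3)
        = ∑ _t ∈ Finset.range L, (2 / 3 : ENNReal) := by
          rw [Finset.sum_const, Finset.card_range, nsmul_eq_mul]
      _ ≤ ∑ t ∈ Finset.range L, (Alg (Sf (2 * t))).toOuterMeasure (OutS (2 * t)) :=
          Finset.sum_le_sum fun t ht => key1 t (Finset.mem_range.mp ht)
      _ ≤ ∑ t ∈ Finset.range L, E * (Alg (Sf 0)).toOuterMeasure (OutS (2 * t)) :=
          Finset.sum_le_sum fun t _ => key2 t
      _ = E * ∑ t ∈ Finset.range L, (Alg (Sf 0)).toOuterMeasure (OutS (2 * t)) :=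
          (Finset.mul_sum _ _ _).symm
      _ ≤ E * 1 := mul_le_mul_right hsum1 _
      _ = E := mul_one _
  -- pass to the reals
  have hER : (L : ℝ) * (2 / 3) ≤ Real.exp ((2 * (α + 1) : ℕ) * ε) := by
    have h1 := ENNReal.toReal_mono ENNReal.ofReal_ne_top hmain
    rw [ENNReal.toReal_mul, ENNReal.toReal_natCast, ENNReal.toReal_ofReal (Real.exp_nonneg _)] at h1
    have h23 : ((2 : ENNReal) / 3).toReal = 2 / 3 := by
      rw [ENNReal.toReal_div]; norm_num
    rw [h23] at h1
    exact h1
  have hNL : (N : ℝ) ≤ 2 * (L : ℝ) := by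
    have : N ≤ 2 * L := by omega
    exact_mod_cast this
  have hm0 : (0 : ℝ) < (m : ℝ) := by exact_mod_cast hm
  have hn0' : (0 : ℝ) < (n : ℝ) := by exact_mod_cast hn0
  have hfrac : (n : ℝ) / (2 * m) = (N : ℝ) / 2 := by
    have hh : (n : ℝ) = (N : ℝ) * (m : ℝ) := by exact_mod_cast hnN.symm
    rw [hh]
    field_simp
  have hpos1 : (0 : ℝ) < (n : ℝ) / (2 * m) := by positivity
  have hchain : (n : ℝ) / (2 * m) * (2 / 3) ≤ Real.exp ((2 * (α + 1) : ℕ) * ε) := by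
    refine le_trans ?_ hER
    rw [hfrac]
    nlinarith
  have hlog : Real.log ((n : ℝ) / (2 * m) * (2 / 3)) ≤ ((2 * (α + 1) : ℕ) : ℝ) * ε := by
    rw [Real.log_le_iff_le_exp (by positivity)]
    exact hchain
  have hsplit : Real.log ((n : ℝ) / (2 * m)) + Real.log (2 / 3) ≤ 2 * ε * ((α : ℝ) + 1) := by
    rw [← Real.log_mul (ne_of_gt hpos1) (by norm_num)]
    refine le_trans hlog (le_of_eq ?_)
    push_cast
    ring
  have h2e : (0 : ℝ) < 2 * ε := by linarith
  have hfin : (2 * ε)⁻¹ * (Real.log ((n : ℝ) / (2 * m)) + Real.log (2 / 3)) ≤ (α : ℝ) + 1 := by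
    rw [inv_mul_le_iff₀ h2e]
    calc Real.log ((n : ℝ) / (2 * m)) + Real.log (2 / 3) ≤ 2 * ε * ((α : ℝ) + 1) := hsplit
      _ = 2 * ε * ((α : ℝ) + 1) := rfl
  linarith
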